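/- Let n ≥ 2 and let a_1,…,a_n be integers with a_i ≥ 2 for all i. Write p/q = [a_1,…,a_n] and p'/q' = [a_2,…,a_n], each as a fraction in lowest terms with p > q ≥ 1 and p' > q' ≥ 1. Suppose p'/(p'−q') = [b_1,…,b_l] with all b_i ≥ 2. Then p/(p−q) = [2,…,2, b_1 + 1, b_2,…,b_l], where there are exactly a_1 − 2 entries equal to 2 at the beginning. -/

import Mathlib

/-- Hirzebruch–Jung continued fraction `[x₁,…,x_r] = x₁ − 1/(x₂ − 1/(⋯ − 1/x_r))`. -/
def hjCF : List ℤ → ℚ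
  | [] => 0
  | a :: l => (a : ℚ) - 1 / hjCF l

lemma hjCF_cons (x : ℤ) (l : List ℤ) : hjCF (x :: l) = (x : ℚ) - 1 / hjCF l := rfl

lemma hjCF_replicate_two (k : ℕ) (rest : List ℤ) (P Q : ℚ) (hQ : 0 < Q) (hPQ : Q < P)
    (h : hjCF rest = (2 * P - Q) / (P - Q)) :
    hjCF (List.replicate k 2 ++ rest) = ((k + 2) * P - Q) / ((k + 1) * P - Q) := by
  induction k with
  | zero => simpa using h
  | succ k ih =>
    have hk : (0:ℚ) ≤ (k:ℚ) := Nat.cast_nonneg k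
    have h1 : (0:ℚ) < ((k:ℚ) + 1) * P - Q := by nlinarith
    have h2 : (0:ℚ) < ((k:ℚ) + 2) * P - Q := by nlinarith
    rw [List.replicate_succ, List.cons_append, hjCF_cons, ih, one_div_div]
    have step : (2:ℚ) - (((k:ℚ)+1)*P - Q)/(((k:ℚ)+2)*P - Q)
        = (((k:ℚ)+3)*P - Q)/(((k:ℚ)+2)*P - Q) := by
      rw [eq_div_iff h2.ne', sub_mul, div_mul_cancel₀ _ h2.ne']; ring
    push_cast
    rw [step, div_eq_div_iff h2.ne' (by nlinarith : (0:ℚ) < ((k:ℚ)+1+1)*P - Q).ne']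
    ring

/-- Indices are 0-based: the chain is `a 0, …, a (n-1)`; the shortened chain is
`a 1, …, a (n-1)`. -/
theorem stmt3 (n : ℕ) (hn : 2 ≤ n) (a : ℕ → ℤ) (ha : ∀ i < n, 2 ≤ a i)
    (p q p' q' : ℕ)
    (hpq : Nat.Coprime p q) (hq : 1 ≤ q) (hqp : q < p)
    (hp'q' : Nat.Coprime p' q') (hq' : 1 ≤ q') (hq'p' : q' < p')
    (hpqv : (p : ℚ) / q = hjCF ((List.range n).map fun i => a i))
    (hp'v : (p' : ℚ) / q' = hjCF ((List.range (n - 1)).map fun i => a (i + 1)))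
    (l : ℕ) (hl : 1 ≤ l)
    (b : ℕ → ℤ) (hb : ∀ i < l, 2 ≤ b i)
    (hbv : (p' : ℚ) / ((p' : ℚ) - q') = hjCF ((List.range l).map fun i => b i)) :
    (p : ℚ) / ((p : ℚ) - q) =
      hjCF (List.replicate ((a 0).toNat - 2) (2 : ℤ) ++ [b 0 + 1] ++
        (List.range (l - 1)).map fun i => b (i + 1)) := by
  have ha0 : 2 ≤ a 0 := ha 0 (by omega)
  -- split the front of the list in hpqv
  have hnsplit : n = (n - 1) + 1 := by omega
  rw [hnsplit, List.range_succ_eq_map, List.map_cons, List.map_map] at hpqv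
  have hmapeq : (List.range (n-1)).map ((fun i => a i) ∘ Nat.succ)
      = (List.range (n-1)).map fun i => a (i + 1) := by
    apply List.map_congr_left; intro x _; simp [Nat.succ_eq_add_one]
  rw [hmapeq, hjCF_cons, ← hp'v] at hpqv
  -- basic positivity
  have hq'0 : (0:ℚ) < q' := by exact_mod_cast hq'
  have hp'0 : (0:ℚ) < p' := by exact_mod_cast (by omega : 0 < p')
  have hq0 : (0:ℚ) < q := by exact_mod_cast hq
  have hq'p'Q : (q':ℚ) < p' := by exact_mod_cast hq'p'
  -- cross multiply
  have key : (p:ℚ) * p' = ((a 0 : ℚ) * p' - q') * q := by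
    rw [one_div_div] at hpqv
    field_simp at hpqv
    linarith [hpqv]
  have keyZ : (p:ℤ) * p' = ((a 0) * p' - q') * q := by exact_mod_cast key
  -- identify p and q
  have hcop1 : IsCoprime (p:ℤ) (q:ℤ) := by exact_mod_cast hpq.isCoprime
  have hcop2 : IsCoprime (p':ℤ) (q':ℤ) := by exact_mod_cast hp'q'.isCoprime
  have hcopP : IsCoprime ((a 0) * p' - q' : ℤ) (p':ℤ) := by
    have := (hcop2.symm.neg_left).add_mul_left_left (a 0)
    convert this using 1; rfl; ring
  have hPpos : (0:ℤ) < (a 0) * p' - q' := by nlinarith [ha0, (by exact_mod_cast hq'p' : (q':ℤ) < p'), (by exact_mod_cast hq' : (1:ℤ) ≤ q')]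
  have hdvd1 : (p:ℤ) ∣ ((a 0) * p' - q') := by
    have : (p:ℤ) ∣ ((a 0) * p' - q') * q := ⟨p', by linarith [keyZ]⟩
    exact (IsCoprime.dvd_of_dvd_mul_right hcop1 this)
  have hdvd2 : ((a 0) * p' - q' : ℤ) ∣ (p:ℤ) := by
    have : ((a 0) * p' - q' : ℤ) ∣ (p:ℤ) * p' := ⟨q, keyZ.symm ▸ rfl⟩
    exact hcopP.dvd_of_dvd_mul_right this
  have hpP : (p:ℤ) = (a 0) * p' - q' :=
    Int.dvd_antisymm (by positivity) (le_of_lt hPpos) hdvd1 hdvd2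
  have hqp' : (q:ℤ) = p' := by
    have hp0 : (p:ℤ) ≠ 0 := by exact_mod_cast (by omega : 0 < p).ne'
    have : (p:ℤ) * p' = (p:ℤ) * q := by rw [keyZ, ← hpP]
    exact (mul_left_cancel₀ hp0 this).symm
  -- the b-side
  have hlsplit : l = (l - 1) + 1 := by omega
  rw [hlsplit, List.range_succ_eq_map, List.map_cons, List.map_map] at hbv
  have hmapeq2 : (List.range (l-1)).map ((fun i => b i) ∘ Nat.succ)
      = (List.range (l-1)).map fun i => b (i + 1) := by
    apply List.map_congr_left; intro x _; simp [Nat.succ_eq_add_one]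
  rw [hmapeq2, hjCF_cons] at hbv
  set tl := (List.range (l-1)).map fun i => b (i + 1) with htl
  have hrest : hjCF ((b 0 + 1) :: tl) = (2 * (p':ℚ) - q') / ((p':ℚ) - q') := by
    rw [hjCF_cons]
    push_cast
    have : ((b 0 : ℚ)) - 1 / hjCF tl = (p':ℚ) / ((p':ℚ) - q') := hbv.symm
    have hne : (p':ℚ) - q' ≠ 0 := by linarith
    rw [show ((b 0 : ℚ)) + 1 - 1 / hjCF tl = ((b 0 : ℚ)) - 1 / hjCF tl + 1 by ring, this]
    field_simp
    ring
  have main := hjCF_replicate_two ((a 0).toNat - 2) ((b 0 + 1) :: tl) (p':ℚ) (q':ℚ)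
    hq'0 hq'p'Q hrest
  have hlist : List.replicate ((a 0).toNat - 2) (2 : ℤ) ++ [b 0 + 1] ++ tl
      = List.replicate ((a 0).toNat - 2) (2 : ℤ) ++ ((b 0 + 1) :: tl) := by
    rw [List.append_assoc, List.singleton_append]
  rw [hlist, main]
  -- finish: identify the fraction with p/(p-q)
  have hk : (((a 0).toNat - 2 : ℕ) : ℚ) + 2 = (a 0 : ℚ) := by
    have h3 : (((a 0).toNat - 2 : ℕ) : ℤ) + 2 = a 0 := by omega
    exact_mod_cast h3
  have hpQ : (p:ℚ) = (a 0 : ℚ) * p' - q' := by exact_mod_cast hpP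
  have hqQ : (q:ℚ) = (p':ℚ) := by exact_mod_cast hqp'
  have hc0 : (0:ℚ) ≤ (((a 0).toNat - 2 : ℕ):ℚ) := Nat.cast_nonneg _
  have hd1 : ((((a 0).toNat - 2 : ℕ):ℚ) + 1) * p' - q' ≠ 0 := by nlinarith
  have hd2 : ((((a 0).toNat - 2 : ℕ):ℚ) + 2) * p' - q' - p' ≠ 0 := by nlinarith
  rw [hpQ, hqQ, ← hk, div_eq_div_iff hd2 hd1]
  ring
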